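/- Let M = [[a,b],[c,d]] be a 2×2 integer matrix with det M ≠ 0, and let f ∈ ℤ[x] be nonconstant and irreducible in ℤ[x]. If deg(μ_M(f)) = deg f, then the primitive part of μ_M(f) (i.e. μ_M(f) divided by its content, normalized to have positive leading coefficient) is irreducible in ℤ[x]. -/

import Mathlib

/-- The Möbius transform of `f` induced by the matrix `[[a,b],[c,d]]`:
`μ_M(f) = Σ_{j≤n} f_j (ax+b)^j (cx+d)^(n-j)` where `n = deg f`. -/
noncomputable def mobius (a b c d : ℤ) (f : Polynomial ℤ) : Polynomial ℤ :=
  ∑ j ∈ Finset.range (f.natDegree + 1),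
    Polynomial.C (f.coeff j) * (Polynomial.C a * Polynomial.X + Polynomial.C b) ^ j *
      (Polynomial.C c * Polynomial.X + Polynomial.C d) ^ (f.natDegree - j)

open Polynomial

noncomputable def phi : Polynomial ℤ →+* RatFunc ℚ :=
  (algebraMap (Polynomial ℚ) (RatFunc ℚ)).comp (Polynomial.mapRingHom (Int.castRingHom ℚ))

lemma phi_inj : Function.Injective phi :=
  (IsFractionRing.injective (Polynomial ℚ) (RatFunc ℚ)).comp
    (Polynomial.map_injective _ Int.cast_injective)

lemma phi_C (r : ℤ) : phi (C r) = (r : RatFunc ℚ) := by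
  rw [show (C r : Polynomial ℤ) = (r : Polynomial ℤ) from Polynomial.C_eq_intCast r,
    map_intCast]

lemma lin_ne_zero (c d : ℤ) (h : ¬(c = 0 ∧ d = 0)) :
    phi (C c * X + C d) ≠ 0 := by
  intro h0
  have : (C c * X + C d : Polynomial ℤ) = 0 := phi_inj (by simpa using h0)
  apply h
  have h1 := Polynomial.ext_iff.mp this 1
  have h0 := Polynomial.ext_iff.mp this 0
  simp only [Polynomial.coeff_add, Polynomial.coeff_C_mul, Polynomial.coeff_X_one,
    Polynomial.coeff_X_zero, Polynomial.coeff_C, Polynomial.coeff_zero, mul_one, mul_zero,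
    if_neg one_ne_zero, if_pos rfl, add_zero, zero_add, if_true] at h1 h0
  exact ⟨h1, h0⟩

lemma mobius_natDegree_le (a b c d : ℤ) (f : Polynomial ℤ) :
    (mobius a b c d f).natDegree ≤ f.natDegree := by
  apply Polynomial.natDegree_sum_le_of_forall_le
  intro j hj
  simp only [Finset.mem_range, Nat.lt_succ_iff] at hj
  calc (C (f.coeff j) * (C a * X + C b) ^ j * (C c * X + C d) ^ (f.natDegree - j)).natDegree
      ≤ (C (f.coeff j) * (C a * X + C b) ^ j).natDegree
        + ((C c * X + C d) ^ (f.natDegree - j)).natDegree := natDegree_mul_le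
    _ ≤ ((C (f.coeff j)).natDegree + ((C a * X + C b) ^ j).natDegree)
        + ((C c * X + C d) ^ (f.natDegree - j)).natDegree := by
        gcongr
        exact natDegree_mul_le
    _ ≤ (0 + j * 1) + (f.natDegree - j) * 1 := by
        gcongr
        · simp
        · exact (natDegree_pow_le).trans (by gcongr; exact natDegree_linear_le)
        · exact (natDegree_pow_le).trans (by gcongr; exact natDegree_linear_le)
    _ ≤ f.natDegree := by omega

lemma phi_mobius (a b c d : ℤ) (f : Polynomial ℤ) (hv : phi (C c * X + C d) ≠ 0) :
    phi (mobius a b c d f) = phi (C c * X + C d) ^ f.natDegree *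
      Polynomial.eval₂ (Int.castRingHom (RatFunc ℚ))
        (phi (C a * X + C b) / phi (C c * X + C d)) f := by
  rw [Polynomial.eval₂_eq_sum_range, mobius, map_sum, Finset.mul_sum]
  apply Finset.sum_congr rfl
  intro j hj
  simp only [Finset.mem_range, Nat.lt_succ_iff] at hj
  rw [map_mul, map_mul, map_pow, map_pow, phi_C]
  set U := phi (C a * X + C b)
  set V := phi (C c * X + C d)
  have hVn : V ^ f.natDegree = V ^ (f.natDegree - j) * V ^ j := by
    rw [← pow_add]; congr 1; omega
  rw [hVn, div_pow]
  have hVj : V ^ j ≠ 0 := pow_ne_zero _ hv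
  field_simp
  simp only [eq_intCast (Int.castRingHom (RatFunc ℚ))]
  ring

lemma mobius_mul (a b c d : ℤ) (g h : Polynomial ℤ) (hv : phi (C c * X + C d) ≠ 0)
    (hg : g ≠ 0) (hh : h ≠ 0) :
    mobius a b c d (g * h) = mobius a b c d g * mobius a b c d h := by
  apply phi_inj
  rw [map_mul, phi_mobius _ _ _ _ _ hv, phi_mobius _ _ _ _ _ hv, phi_mobius _ _ _ _ _ hv,
    Polynomial.natDegree_mul hg hh, Polynomial.eval₂_mul, pow_add]
  ring

lemma mobius_mobius (a b c d : ℤ) (hdet : a * d - b * c ≠ 0) (f : Polynomial ℤ)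
    (hdeg : (mobius a b c d f).natDegree = f.natDegree) :
    mobius d (-b) (-c) a (mobius a b c d f) = C ((a * d - b * c) ^ f.natDegree) * f := by
  have hv' : phi (C (-c) * X + C a) ≠ 0 := by
    apply lin_ne_zero
    rintro ⟨hc, ha⟩
    apply hdet
    have hc0 : c = 0 := by omega
    rw [hc0, ha]; ring
  apply phi_inj
  rw [phi_mobius d (-b) (-c) a _ hv', hdeg]
  set t : RatFunc ℚ := phi X with ht
  set v' : RatFunc ℚ := phi (C (-c) * X + C a) with hv'def
  set w : RatFunc ℚ := phi (C d * X + C (-b)) / v' with hw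
  have hv'exp : v' = ((-c : ℤ) : RatFunc ℚ) * t + ((a : ℤ) : RatFunc ℚ) := by
    rw [hv'def, map_add, map_mul, phi_C, phi_C]
  have hu'exp : phi (C d * X + C (-b)) = ((d : ℤ) : RatFunc ℚ) * t + ((-b : ℤ) : RatFunc ℚ) := by
    rw [map_add, map_mul, phi_C, phi_C]
  set Δ : RatFunc ℚ := ((a * d - b * c : ℤ) : RatFunc ℚ) with hΔdef
  have e1 : ((a : ℤ) : RatFunc ℚ) * w + ((b : ℤ) : RatFunc ℚ) = Δ * t / v' := by
    rw [hw, hu'exp]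
    field_simp
    rw [hv'exp, hΔdef]
    push_cast
    ring
  have e2 : ((c : ℤ) : RatFunc ℚ) * w + ((d : ℤ) : RatFunc ℚ) = Δ / v' := by
    rw [hw, hu'exp]
    field_simp
    rw [hv'exp, hΔdef]
    push_cast
    ring
  have hfexp : phi f = ∑ j ∈ Finset.range (f.natDegree + 1),
      ((f.coeff j : ℤ) : RatFunc ℚ) * t ^ j := by
    conv_lhs => rw [Polynomial.as_sum_range' f (f.natDegree + 1) (Nat.lt_succ_self _)]
    rw [map_sum]
    exact Finset.sum_congr rfl fun j _ => by
      rw [← Polynomial.C_mul_X_pow_eq_monomial, map_mul, map_pow, phi_C]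
  rw [map_mul, phi_C, hfexp]
  rw [mobius, Polynomial.eval₂_finset_sum, Finset.mul_sum, Finset.mul_sum]
  apply Finset.sum_congr rfl
  intro j hj
  simp only [Finset.mem_range, Nat.lt_succ_iff] at hj
  rw [Polynomial.eval₂_mul, Polynomial.eval₂_mul, Polynomial.eval₂_pow, Polynomial.eval₂_pow,
    Polynomial.eval₂_C, Polynomial.eval₂_add, Polynomial.eval₂_add, Polynomial.eval₂_mul,
    Polynomial.eval₂_mul, Polynomial.eval₂_C, Polynomial.eval₂_C, Polynomial.eval₂_C,
    Polynomial.eval₂_C, Polynomial.eval₂_X]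
  rw [show (Int.castRingHom (RatFunc ℚ)) a = ((a : ℤ) : RatFunc ℚ) from rfl,
    show (Int.castRingHom (RatFunc ℚ)) b = ((b : ℤ) : RatFunc ℚ) from rfl,
    show (Int.castRingHom (RatFunc ℚ)) c = ((c : ℤ) : RatFunc ℚ) from rfl,
    show (Int.castRingHom (RatFunc ℚ)) d = ((d : ℤ) : RatFunc ℚ) from rfl,
    show (Int.castRingHom (RatFunc ℚ)) (f.coeff j) = ((f.coeff j : ℤ) : RatFunc ℚ) from rfl,
    e1, e2]
  have hsplitv : v' ^ f.natDegree = v' ^ j * v' ^ (f.natDegree - j) := by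
    rw [← pow_add]; congr 1; omega
  have hsplitΔ : ((a * d - b * c) ^ f.natDegree : ℤ) = ((a*d-b*c)^j * (a*d-b*c)^(f.natDegree - j) : ℤ) := by
    rw [← pow_add]; congr 1; omega
  rw [hsplitv, hsplitΔ, div_pow, div_pow]
  have hvj : v' ^ j ≠ 0 := pow_ne_zero _ hv'
  have hvnj : v' ^ (f.natDegree - j) ≠ 0 := pow_ne_zero _ hv'
  field_simp
  rw [hΔdef]
  push_cast
  rw [mul_pow]
  ring

theorem stmt8 (a b c d : ℤ) (hdet : a * d - b * c ≠ 0) (f : Polynomial ℤ)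
    (hf : 1 ≤ f.natDegree) (hirr : Irreducible f)
    (hdeg : (mobius a b c d f).natDegree = f.natDegree) :
    Irreducible (mobius a b c d f).primPart := by
  set n := f.natDegree with hn
  set p := mobius a b c d f with hp
  have hB : mobius d (-b) (-c) a p = C ((a * d - b * c) ^ n) * f :=
    mobius_mobius a b c d hdet f hdeg
  have hΔ : (a * d - b * c) ^ n ≠ 0 := pow_ne_zero _ hdet
  have hf0 : f ≠ 0 := fun h0 => by rw [hn, h0] at hf; simp at hf
  have hCf : (C ((a * d - b * c) ^ n) * f : Polynomial ℤ) ≠ 0 :=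
    mul_ne_zero (Polynomial.C_ne_zero.mpr hΔ) hf0
  have hp0 : p ≠ 0 := by
    intro h0
    rw [h0, show mobius d (-b) (-c) a 0 = 0 by simp [mobius]] at hB
    exact hCf hB.symm
  have hpp0 : p.primPart ≠ 0 := by
    intro h0
    exact hp0 (by rw [Polynomial.eq_C_content_mul_primPart p, h0, mul_zero])
  constructor
  · intro hu
    have h0 := Polynomial.natDegree_eq_zero_of_isUnit hu
    rw [Polynomial.natDegree_primPart, hdeg] at h0
    omega
  · intro g h hgh
    by_contra hcon
    push_neg at hcon
    obtain ⟨hgu, hhu⟩ := hcon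
    have hg0 : g ≠ 0 := by rintro rfl; rw [zero_mul] at hgh; exact hpp0 hgh
    have hh0 : h ≠ 0 := by rintro rfl; rw [mul_zero] at hgh; exact hpp0 hgh
    have hdegsum : g.natDegree + h.natDegree = n := by
      have := Polynomial.natDegree_mul hg0 hh0
      rw [← hgh, Polynomial.natDegree_primPart, hdeg] at this
      omega
    have hg1 : 1 ≤ g.natDegree := by
      by_contra hlt
      have hg00 : g.natDegree = 0 := by omega
      obtain ⟨r, rfl⟩ := Polynomial.natDegree_eq_zero.mp hg00
      exact hgu (Polynomial.isUnit_C.mpr ((Polynomial.isPrimitive_primPart p) r ⟨h, hgh⟩))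
    have hh1 : 1 ≤ h.natDegree := by
      by_contra hlt
      have hh00 : h.natDegree = 0 := by omega
      obtain ⟨r, rfl⟩ := Polynomial.natDegree_eq_zero.mp hh00
      exact hhu (Polynomial.isUnit_C.mpr ((Polynomial.isPrimitive_primPart p) r
        ⟨g, by rw [hgh]; ring⟩))
    set g' : Polynomial ℤ := C p.content * g with hg'
    have hpfact : p = g' * h := by
      rw [hg', mul_assoc, ← hgh, ← Polynomial.eq_C_content_mul_primPart]
    have hc0 : p.content ≠ 0 := fun h0 => hp0 (Polynomial.content_eq_zero_iff.mp h0)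
    have hg'0 : g' ≠ 0 := mul_ne_zero (Polynomial.C_ne_zero.mpr hc0) hg0
    have hv' : phi (C (-c) * X + C a) ≠ 0 := by
      apply lin_ne_zero
      rintro ⟨h1, h2⟩
      apply hdet
      have hc : c = 0 := by omega
      rw [hc, h2]; ring
    have hmul := mobius_mul d (-b) (-c) a g' h hv' hg'0 hh0
    rw [← hpfact, hB] at hmul
    set G := mobius d (-b) (-c) a g' with hG
    set H := mobius d (-b) (-c) a h with hH
    have hGH0 : G * H ≠ 0 := by rw [← hmul]; exact hCf
    have hG0 : G ≠ 0 := left_ne_zero_of_mul hGH0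
    have hH0 : H ≠ 0 := right_ne_zero_of_mul hGH0
    have hg'd : g'.natDegree = g.natDegree := by
      rw [hg', Polynomial.natDegree_C_mul hc0]
    have hdG : G.natDegree ≤ g.natDegree := by
      have := mobius_natDegree_le d (-b) (-c) a g'
      rw [← hG] at this
      omega
    have hdH : H.natDegree ≤ h.natDegree := by
      have := mobius_natDegree_le d (-b) (-c) a h
      rw [← hH] at this
      exact this
    have hprime : Prime f := UniqueFactorizationMonoid.irreducible_iff_prime.mp hirr
    have hdvd : f ∣ G * H := ⟨C ((a * d - b * c) ^ n), by rw [← hmul]; ring⟩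
    rcases hprime.2.2 G H hdvd with hfd | hfd
    · have := Polynomial.natDegree_le_of_dvd hfd hG0
      omega
    · have := Polynomial.natDegree_le_of_dvd hfd hH0
      omega
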